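/- Let p ≥ 1 be a real number, j ∈ ℕ, and a, b > 0. Then binom(j+p−1, j) · a^j · b^{p−1} ≤ (a+b)^{j+p−1}, where binom(j+p−1, j) = Γ(j+p)/(Γ(j+1)Γ(p)). Consequently, for every ε > 0: binom(j+p−1, j) ≤ (1+ε)^j · ((1+ε)/ε)^{p−1}. -/

import Mathlib

lemma realBeta (p : ℝ) (hp : 0 < p) (n : ℕ) :
    Real.Gamma (n + 1) * Real.Gamma p =
      Real.Gamma ((n + 1) + p) * ∫ t in (0:ℝ)..1, t ^ n * (1 - t) ^ (p - 1) := by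
  have h1 : (0 : ℝ) < ((n:ℂ) + 1).re := by simp; positivity
  have h2 : (0 : ℝ) < ((p:ℂ)).re := by simpa using hp
  have hB := Complex.Gamma_mul_Gamma_eq_betaIntegral h1 h2
  have hInt : Complex.betaIntegral ((n:ℂ)+1) p =
      ((∫ t in (0:ℝ)..1, t ^ n * (1 - t) ^ (p - 1) : ℝ) : ℂ) := by
    rw [Complex.betaIntegral, ← intervalIntegral.integral_ofReal]
    apply intervalIntegral.integral_congr
    intro t ht
    rw [Set.uIcc_of_le (by norm_num)] at ht
    obtain ⟨ht0, ht1⟩ := ht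
    push_cast
    rw [Complex.ofReal_cpow (by linarith) (p-1)]
    have : ((n:ℂ)+1-1) = (n:ℕ) := by push_cast; ring
    rw [this, Complex.cpow_natCast]
    push_cast
    ring
  rw [hInt] at hB
  have := congrArg Complex.re hB
  simpa [← Complex.ofReal_natCast, ← Complex.ofReal_one, ← Complex.ofReal_add,
    Complex.Gamma_ofReal, ← Complex.ofReal_mul] using this

lemma key (p : ℝ) (hp : 1 ≤ p) (n : ℕ) (x : ℝ) (hx0 : 0 < x) (hx1 : x < 1) :
    x ^ (n+1) * (1 - x) ^ (p - 1) ≤ (n + 1 : ℝ) * ∫ t in (0:ℝ)..1, t ^ n * (1 - t) ^ (p - 1) := by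
  set f : ℝ → ℝ := fun t => t ^ n * (1 - t) ^ (p - 1) with hf
  have hcont : Continuous f := by
    apply (continuous_pow n).mul
    apply (continuous_const.sub continuous_id).rpow_const
    intro t; right; linarith
  have hnn : ∀ t ∈ Set.Icc (0:ℝ) 1, 0 ≤ f t := by
    intro t ht
    have : (0:ℝ) ≤ t ^ n := pow_nonneg ht.1 n
    have : (0:ℝ) ≤ (1 - t) ^ (p-1) := Real.rpow_nonneg (by linarith [ht.2]) _
    positivity
  have h1 : ∫ t in (0:ℝ)..x, f t ≤ ∫ t in (0:ℝ)..1, f t := by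
    apply intervalIntegral.integral_mono_interval le_rfl hx0.le hx1.le
    · rw [Filter.EventuallyLE, MeasureTheory.ae_restrict_iff' measurableSet_Ioc]
      filter_upwards with t ht
      exact hnn t ⟨ht.1.le, ht.2⟩
    · exact hcont.intervalIntegrable 0 1
  have h2 : ∫ t in (0:ℝ)..x, (t ^ n * (1 - x) ^ (p - 1)) ≤ ∫ t in (0:ℝ)..x, f t := by
    apply intervalIntegral.integral_mono_on hx0.le
    · exact (Continuous.intervalIntegrable (by continuity) 0 x)
    · exact hcont.intervalIntegrable 0 x
    · intro t ht
      have h0t : 0 ≤ t := ht.1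
      have : (1 - x) ^ (p-1) ≤ (1 - t) ^ (p-1) :=
        Real.rpow_le_rpow (by linarith) (by linarith [ht.2]) (by linarith)
      exact mul_le_mul_of_nonneg_left this (pow_nonneg h0t n)
  have h3 : ∫ t in (0:ℝ)..x, (t ^ n * (1 - x) ^ (p - 1)) = x ^ (n+1) / (n+1) * (1-x)^(p-1) := by
    rw [intervalIntegral.integral_mul_const, integral_pow]
    norm_num
  have hpos : (0:ℝ) < (n:ℝ) + 1 := by positivity
  rw [h3] at h2
  have := h2.trans h1
  calc x ^ (n+1) * (1-x)^(p-1) = ((n:ℝ)+1) * (x ^ (n+1) / (n+1) * (1-x)^(p-1)) := by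
        field_simp
    _ ≤ ((n:ℝ)+1) * ∫ t in (0:ℝ)..1, f t := mul_le_mul_of_nonneg_left this hpos.le

lemma keyG (p : ℝ) (hp : 1 ≤ p) (j : ℕ) (x : ℝ) (hx0 : 0 < x) (hx1 : x < 1) :
    Real.Gamma ((j:ℝ)+p) * (x ^ j * (1-x) ^ (p-1)) ≤ Real.Gamma ((j:ℝ)+1) * Real.Gamma p := by
  have hp0 : 0 < p := by linarith
  have hGp : 0 < Real.Gamma p := Real.Gamma_pos_of_pos hp0
  cases j with
  | zero =>
    simp only [Nat.cast_zero, zero_add, Real.Gamma_one, pow_zero, one_mul]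
    have h1 : (1-x) ^ (p-1) ≤ 1 :=
      Real.rpow_le_one (by linarith) (by linarith) (by linarith)
    nlinarith
  | succ n =>
    have hb := realBeta p hp0 n
    have hk := key p hp n x hx0 hx1
    have hΓpos : 0 < Real.Gamma ((n:ℝ)+1+p) := Real.Gamma_pos_of_pos (by positivity)
    push_cast
    calc Real.Gamma ((n:ℝ)+1+p) * (x^(n+1)*(1-x)^(p-1))
        ≤ Real.Gamma ((n:ℝ)+1+p) * (((n:ℝ)+1) * ∫ t in (0:ℝ)..1, t ^ n * (1 - t) ^ (p - 1)) :=
          mul_le_mul_of_nonneg_left hk hΓpos.le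
      _ = ((n:ℝ)+1) * (Real.Gamma ((n:ℝ)+1) * Real.Gamma p) := by rw [hb]; ring
      _ = Real.Gamma ((n:ℝ)+1+1) * Real.Gamma p := by
          rw [show Real.Gamma ((n:ℝ)+1+1) = ((n:ℝ)+1) * Real.Gamma ((n:ℝ)+1) from
            Real.Gamma_add_one (by positivity)]; ring

lemma part1 (p : ℝ) (hp : 1 ≤ p) (j : ℕ) (a b : ℝ) (ha : 0 < a) (hb : 0 < b) :
    Real.Gamma ((j : ℝ) + p) / (Real.Gamma ((j : ℝ) + 1) * Real.Gamma p) * a ^ j *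
        b ^ (p - 1) ≤ (a + b) ^ ((j : ℝ) + p - 1) := by
  have hp0 : 0 < p := by linarith
  have hs : 0 < a + b := by linarith
  set x := a / (a + b) with hxdef
  have hx0 : 0 < x := div_pos ha hs
  have hx1 : x < 1 := (div_lt_one hs).mpr (by linarith)
  have hD : 0 < Real.Gamma ((j:ℝ)+1) * Real.Gamma p :=
    mul_pos (Real.Gamma_pos_of_pos (by positivity)) (Real.Gamma_pos_of_pos hp0)
  have hG := keyG p hp j x hx0 hx1
  have key2 : Real.Gamma ((j:ℝ)+p) / (Real.Gamma ((j:ℝ)+1) * Real.Gamma p) *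
      (x ^ j * (1-x) ^ (p-1)) ≤ 1 := by
    rw [div_mul_eq_mul_div, div_le_one hD]; exact hG
  have hxa : x * (a+b) = a := by rw [hxdef]; field_simp
  have h1xb : (1-x) * (a+b) = b := by rw [hxdef]; field_simp; ring
  have heq : a ^ j * b ^ (p-1) = (x ^ j * (1-x) ^ (p-1)) * (a+b) ^ ((j:ℝ)+p-1) := by
    calc a ^ j * b ^ (p-1) = (x*(a+b)) ^ j * ((1-x)*(a+b)) ^ (p-1) := by rw [hxa, h1xb]
      _ = x ^ j * (a+b) ^ j * ((1-x) ^ (p-1) * (a+b) ^ (p-1)) := by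
          rw [mul_pow, Real.mul_rpow (by linarith) hs.le]
      _ = (x ^ j * (1-x) ^ (p-1)) * ((a+b) ^ (j:ℝ) * (a+b) ^ (p-1)) := by
          rw [Real.rpow_natCast]; ring
      _ = (x ^ j * (1-x) ^ (p-1)) * (a+b) ^ ((j:ℝ)+(p-1)) := by
          rw [← Real.rpow_add hs]
      _ = (x ^ j * (1-x) ^ (p-1)) * (a+b) ^ ((j:ℝ)+p-1) := by ring_nf
  calc Real.Gamma ((j:ℝ)+p) / (Real.Gamma ((j:ℝ)+1) * Real.Gamma p) * a ^ j * b ^ (p-1)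
      = (Real.Gamma ((j:ℝ)+p) / (Real.Gamma ((j:ℝ)+1) * Real.Gamma p) *
          (x ^ j * (1-x) ^ (p-1))) * (a+b) ^ ((j:ℝ)+p-1) := by
        rw [mul_assoc, heq]; ring
    _ ≤ 1 * (a+b) ^ ((j:ℝ)+p-1) :=
        mul_le_mul_of_nonneg_right key2 (Real.rpow_nonneg hs.le _)
    _ = (a+b) ^ ((j:ℝ)+p-1) := one_mul _

/-- For real `p ≥ 1`, `j ∈ ℕ` and `a, b > 0`:
`binom(j+p−1,j) · a^j · b^{p−1} ≤ (a+b)^{j+p−1}` where `binom(j+p−1,j) = Γ(j+p)/(Γ(j+1)Γ(p))`;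
consequently, for every `ε > 0`, `binom(j+p−1,j) ≤ (1+ε)^j · ((1+ε)/ε)^{p−1}`. -/
theorem genBinom_bound (p : ℝ) (hp : 1 ≤ p) (j : ℕ) (a b : ℝ) (ha : 0 < a) (hb : 0 < b) :
    Real.Gamma ((j : ℝ) + p) / (Real.Gamma ((j : ℝ) + 1) * Real.Gamma p) * a ^ j *
        b ^ (p - 1) ≤ (a + b) ^ ((j : ℝ) + p - 1) ∧
    ∀ ε : ℝ, 0 < ε →
      Real.Gamma ((j : ℝ) + p) / (Real.Gamma ((j : ℝ) + 1) * Real.Gamma p) ≤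
        (1 + ε) ^ j * ((1 + ε) / ε) ^ (p - 1) := by
  refine ⟨part1 p hp j a b ha hb, fun ε hε => ?_⟩
  have h1ε : (0:ℝ) < 1 + ε := by linarith
  have h := part1 p hp j 1 ε one_pos hε
  rw [one_pow, mul_one] at h
  have hrhs : (1 + ε) ^ ((j:ℝ) + p - 1) = (1+ε) ^ j * (1+ε) ^ (p-1) := by
    rw [show (j:ℝ) + p - 1 = (j:ℝ) + (p-1) by ring, Real.rpow_add h1ε, Real.rpow_natCast]
  rw [Real.div_rpow h1ε.le hε.le, mul_div_assoc', le_div_iff₀ (Real.rpow_pos_of_pos hε _)]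
  rw [hrhs] at h
  exact h
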